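/- Let n ≥ 3 and let i be an integer with 1 ≤ i ≤ n−2. For every permutation p of {1,…,n}, exactly one of the three entries p_i, p_{i+1}, p_{i+2} is an ancestor in T^m_p of the other two (equivalently, among these three entries there is a unique one closest to the root, the i-th local extremum e_i of p). -/

import Mathlib

/-- Binary trees with natural-number labels, used to model minmax trees of
permutations. -/
inductive BTree where
  | nil : BTree
  | node : ℕ → BTree → BTree → BTree
deriving DecidableEq, Repr

namespace BTree

/-- The label of the root (if any). -/
def rootVal : BTree → Option ℕ
  | .nil => none
  | .node v _ _ => some v

/-- Whether the value `x` occurs as a label in the tree. -/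
def memB : BTree → ℕ → Bool
  | .nil, _ => false
  | .node v l r, x => (x == v) || memB l x || memB r x

/-- The number of children of the (unique, for permutations) node labelled `x`. -/
def numChildren : BTree → ℕ → ℕ
  | .nil, _ => 0
  | .node v l r, x =>
      if x = v then (if l = .nil then 0 else 1) + (if r = .nil then 0 else 1)
      else numChildren l x + numChildren r x

/-- `x` is a leaf of the tree: it occurs in the tree and has no children. -/
def IsLeaf (t : BTree) (x : ℕ) : Prop := t.memB x = true ∧ t.numChildren x = 0

instance (t : BTree) (x : ℕ) : Decidable (t.IsLeaf x) := by unfold IsLeaf; infer_instance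

/-- `childB t x y = true` iff `x` is a child of `y` in `t`, i.e. `x` is the root of
the left or the right subtree hanging from `y`. -/
def childB : BTree → ℕ → ℕ → Bool
  | .nil, _, _ => false
  | .node v l r, x, y =>
      ((y == v) && (l.rootVal == some x || r.rootVal == some x))
      || childB l x y || childB r x y

/-- `ancB t x y = true` iff `x` is a (strict) ancestor of `y` in `t`, i.e. `y` lies
in a subtree hanging from `x`. -/
def ancB : BTree → ℕ → ℕ → Bool
  | .nil, _, _ => false
  | .node v l r, x, y =>
      ((x == v) && (memB l y || memB r y)) || ancB l x y || ancB r x y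

end BTree

/-- `x` is the leftmost-eligible extreme letter of `l`: the minimum or the maximum. -/
def isExtreme (l : List ℕ) (x : ℕ) : Bool :=
  (l.min? == some x) || (l.max? == some x)

/-- Fuelled construction of the minmax tree of a list of distinct naturals:
split the list as `u ++ [m] ++ v` where `m` is the leftmost of the minimum and
maximum letters, put `m` at the root and recurse on `u` (left) and `v` (right). -/
def mmAux : ℕ → List ℕ → BTree
  | 0, _ => .nil
  | fuel+1, l =>
    if l.isEmpty then .nil
    else
      let k := l.findIdx (isExtreme l)
      .node (l.getD k 0) (mmAux fuel (l.take k)) (mmAux fuel (l.drop (k+1)))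

/-- The minmax tree `T^m_p` of a word `l` (with distinct letters). -/
def minmaxTree (l : List ℕ) : BTree := mmAux l.length l

/-- The word `p_1 p_2 … p_n` on the letters `{1,…,n}` associated to a permutation
`p` of `Fin n`. -/
def permList (n : ℕ) (p : Equiv.Perm (Fin n)) : List ℕ :=
  List.ofFn (fun i => (p i : ℕ) + 1)

/-- The `i`-th entry `p_i` (1-indexed) of the permutation `p`. -/
def entryAt (n : ℕ) (p : Equiv.Perm (Fin n)) (i : ℕ) : ℕ :=
  (permList n p).getD (i - 1) 0

namespace BTree

/-- The list of labels of a tree, in preorder. -/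
def labels : BTree → List ℕ
  | .nil => []
  | .node v a b => v :: (labels a ++ labels b)

lemma mem_labels (t : BTree) (x : ℕ) : x ∈ labels t ↔ memB t x = true := by
  induction t with
  | nil => simp [labels, memB]
  | node v a b ha hb => simp [labels, memB, ha, hb, or_assoc]

lemma ancB_memB {t : BTree} {x y : ℕ} (h : ancB t x y = true) :
    memB t x = true ∧ memB t y = true := by
  induction t with
  | nil => simp [ancB] at h
  | node v a b ha hb =>
    simp only [ancB, Bool.or_eq_true, Bool.and_eq_true, beq_iff_eq] at h
    simp only [memB, Bool.or_eq_true, beq_iff_eq]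
    rcases h with (⟨rfl, h⟩ | h) | h
    · exact ⟨Or.inl (Or.inl rfl), h.elim (fun h => Or.inl (Or.inr h)) Or.inr⟩
    · rcases ha h with ⟨h1, h2⟩; tauto
    · rcases hb h with ⟨h1, h2⟩; tauto

lemma ancB_asymm {t : BTree} (hn : (labels t).Nodup) {x y : ℕ}
    (h1 : ancB t x y = true) (h2 : ancB t y x = true) : False := by
  induction t with
  | nil => simp [ancB] at h1
  | node v a b ha hb =>
    simp only [labels, List.nodup_cons, List.nodup_append, List.mem_append] at hn
    obtain ⟨hv, hna, hnb, hd⟩ := hn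
    simp only [ancB, Bool.or_eq_true, Bool.and_eq_true, beq_iff_eq] at h1 h2
    have hma : ∀ z w, ancB a z w = true → z ∈ labels a ∧ w ∈ labels a := by
      intro z w h
      rcases ancB_memB h with ⟨u1, u2⟩
      exact ⟨(mem_labels a z).2 u1, (mem_labels a w).2 u2⟩
    have hmb : ∀ z w, ancB b z w = true → z ∈ labels b ∧ w ∈ labels b := by
      intro z w h
      rcases ancB_memB h with ⟨u1, u2⟩
      exact ⟨(mem_labels b z).2 u1, (mem_labels b w).2 u2⟩
    rcases h1 with (⟨rfl, h1⟩ | h1) | h1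
    · -- x = v
      rcases h2 with (⟨rfl, h2⟩ | h2) | h2
      · rcases h2 with h2 | h2
        · exact hv (Or.inl ((mem_labels a _).2 h2))
        · exact hv (Or.inr ((mem_labels b _).2 h2))
      · exact hv (Or.inl (hma _ _ h2).2)
      · exact hv (Or.inr (hmb _ _ h2).2)
    · -- ancB a x y
      rcases h2 with (⟨rfl, h2⟩ | h2) | h2
      · exact hv (Or.inl (hma _ _ h1).2)
      · exact ha hna h1 h2
      · exact hd _ (hma _ _ h1).1 _ (hmb _ _ h2).2 rfl
    · -- ancB b x y
      rcases h2 with (⟨rfl, h2⟩ | h2) | h2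
      · exact hv (Or.inr (hmb _ _ h1).2)
      · exact hd _ (hma _ _ h2).2 _ (hmb _ _ h1).1 rfl
      · exact hb hnb h1 h2

end BTree

lemma findIdx_isExtreme_lt (l : List ℕ) (hl : l ≠ []) :
    l.findIdx (isExtreme l) < l.length := by
  obtain ⟨m, hm⟩ : ∃ m, l.min? = some m := by
    cases l with
    | nil => exact absurd rfl hl
    | cons a t => exact ⟨_, rfl⟩
  have hmem : m ∈ l := List.min?_mem hm
  exact List.findIdx_lt_length_of_exists ⟨m, hmem, by simp [isExtreme, hm]⟩

lemma labels_mmAux : ∀ (fuel : ℕ) (l : List ℕ), l.length ≤ fuel →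
    (mmAux fuel l).labels.Perm l := by
  intro fuel
  induction fuel with
  | zero =>
    intro l h
    have : l = [] := List.eq_nil_of_length_eq_zero (Nat.le_zero.1 h)
    subst this; simp [mmAux, BTree.labels]
  | succ f ih =>
    intro l h
    by_cases hl : l.isEmpty
    · have : l = [] := List.isEmpty_iff.1 hl
      subst this; simp [mmAux, BTree.labels]
    · have hne : l ≠ [] := by simpa [List.isEmpty_iff] using hl
      rw [mmAux]; simp only [hl, if_false, Bool.false_eq_true]
      set k := l.findIdx (isExtreme l) with hk
      have hkl : k < l.length := findIdx_isExtreme_lt l hne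
      have htk : (l.take k).length ≤ f := by
        rw [List.length_take]; omega
      have hdk : (l.drop (k+1)).length ≤ f := by
        rw [List.length_drop]; omega
      have h1 := ih (l.take k) htk
      have h2 := ih (l.drop (k+1)) hdk
      have hgd : l.getD k 0 = l[k] := List.getD_eq_getElem l 0 hkl
      have heq : l.take k ++ l.getD k 0 :: l.drop (k+1) = l := by
        rw [hgd, ← List.drop_eq_getElem_cons hkl, List.take_append_drop]
      have step : (l.getD k 0 :: (l.take k ++ l.drop (k+1))).Perm l := by
        conv_rhs => rw [← heq]
        exact List.perm_middle.symm
      exact List.Perm.trans (List.Perm.cons _ (h1.append h2)) step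

lemma memB_mmAux {fuel : ℕ} {l : List ℕ} (h : l.length ≤ fuel) (x : ℕ) :
    (mmAux fuel l).memB x = true ↔ x ∈ l := by
  rw [← BTree.mem_labels]
  exact (labels_mmAux fuel l h).mem_iff

lemma mm_exists : ∀ (fuel : ℕ) (l : List ℕ), l.Nodup → l.length ≤ fuel →
    ∀ a m, 1 ≤ m → a + m ≤ l.length →
    ∃ j, a ≤ j ∧ j < a + m ∧ ∀ j', a ≤ j' → j' < a + m → j' ≠ j →
      (mmAux fuel l).ancB (l.getD j 0) (l.getD j' 0) = true := by
  intro fuel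
  induction fuel with
  | zero => intro l _ hlen a m hm ham; omega
  | succ f ih =>
    intro l hnd hlen a m hm ham
    have hne : l ≠ [] := by
      intro h; subst h; simp at ham; omega
    have hl : l.isEmpty = false := by simpa [List.isEmpty_iff] using hne
    set k := l.findIdx (isExtreme l) with hkdef
    have hkl : k < l.length := findIdx_isExtreme_lt l hne
    have htree : mmAux (f+1) l =
        .node (l.getD k 0) (mmAux f (l.take k)) (mmAux f (l.drop (k+1))) := by
      rw [mmAux]; simp [hl]; exact ⟨rfl, rfl, rfl⟩
    have htk : (l.take k).length = k := by rw [List.length_take]; omega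
    have hdk : (l.drop (k+1)).length = l.length - (k+1) := List.length_drop
    have htkf : (l.take k).length ≤ f := by omega
    have hdkf : (l.drop (k+1)).length ≤ f := by omega
    rcases Nat.lt_or_ge k a with hka | hka
    · -- segment inside the right part
      obtain ⟨j0, hj0a, hj0b, hj0⟩ :=
        ih (l.drop (k+1)) (List.Nodup.sublist (List.drop_sublist _ _) hnd) hdkf
          (a - (k+1)) m hm (by omega)
      refine ⟨k + 1 + j0, by omega, by omega, ?_⟩
      intro j' hj'a hj'b hj'ne
      have hlt : k + 1 + j0 < l.length := by omega
      have hlt' : j' < l.length := by omega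
      have hlt0 : j0 < (l.drop (k+1)).length := by omega
      have hlt0' : j' - (k+1) < (l.drop (k+1)).length := by omega
      have e1 : l.getD (k + 1 + j0) 0 = (l.drop (k+1)).getD j0 0 := by
        rw [List.getD_eq_getElem l 0 hlt, List.getD_eq_getElem _ 0 hlt0,
          List.getElem_drop]
      have e2 : l.getD j' 0 = (l.drop (k+1)).getD (j' - (k+1)) 0 := by
        rw [List.getD_eq_getElem l 0 hlt', List.getD_eq_getElem _ 0 hlt0',
          List.getElem_drop]
        congr 1; omega
      rw [e1, e2, htree]
      have := hj0 (j' - (k+1)) (by omega) (by omega) (by omega)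
      simp only [BTree.ancB, Bool.or_eq_true]
      tauto
    · rcases Nat.lt_or_ge k (a + m) with hkm | hkm
      · -- the root index k lies in the segment
        refine ⟨k, hka, hkm, ?_⟩
        intro j' hj'a hj'b hj'ne
        have hlt' : j' < l.length := by omega
        have hy : l.getD j' 0 ∈ l.take k ∨ l.getD j' 0 ∈ l.drop (k+1) := by
          rcases Nat.lt_or_ge j' k with hc | hc
          · left
            have hlt0 : j' < (l.take k).length := by omega
            rw [List.getD_eq_getElem l 0 hlt', ← List.getElem_take (h := hlt0)]
            exact List.getElem_mem _
          · right
            have hc' : k + 1 ≤ j' := by omega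
            have hlt0 : j' - (k+1) < (l.drop (k+1)).length := by omega
            rw [List.getD_eq_getElem l 0 hlt']
            have : l[j'] = (l.drop (k+1))[j' - (k+1)] := by
              rw [List.getElem_drop]; congr 1; omega
            rw [this]
            exact List.getElem_mem _
        rw [htree]
        simp only [BTree.ancB, Bool.or_eq_true, Bool.and_eq_true, beq_iff_eq]
        left; left
        refine ⟨trivial, ?_⟩
        rcases hy with hy | hy
        · left; exact (memB_mmAux htkf _).2 hy
        · right; exact (memB_mmAux hdkf _).2 hy
      · -- segment inside the left part
        obtain ⟨j0, hj0a, hj0b, hj0⟩ :=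
          ih (l.take k) (List.Nodup.sublist (List.take_sublist _ _) hnd) htkf a m hm (by omega)
        refine ⟨j0, hj0a, hj0b, ?_⟩
        intro j' hj'a hj'b hj'ne
        have e1 : l.getD j0 0 = (l.take k).getD j0 0 := by
          have h1 : j0 < (l.take k).length := by omega
          have h2 : j0 < l.length := by omega
          rw [List.getD_eq_getElem l 0 h2, List.getD_eq_getElem _ 0 h1,
            List.getElem_take]
        have e2 : l.getD j' 0 = (l.take k).getD j' 0 := by
          have h1 : j' < (l.take k).length := by omega
          have h2 : j' < l.length := by omega
          rw [List.getD_eq_getElem l 0 h2, List.getD_eq_getElem _ 0 h1,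
            List.getElem_take]
        rw [e1, e2, htree]
        have := hj0 j' hj'a hj'b hj'ne
        simp only [BTree.ancB, Bool.or_eq_true]
        tauto


/-- For `n ≥ 3` and `1 ≤ i ≤ n − 2`, in every permutation `p` of
`{1,…,n}` exactly one of the three entries `p_i, p_{i+1}, p_{i+2}` is an ancestor in
the minmax tree of the other two (the `i`-th local extremum `e_i` of `p`). -/
theorem local_extremum_exists_unique (n : ℕ) (hn : 3 ≤ n) (i : ℕ) (hi1 : 1 ≤ i)
    (hi2 : i ≤ n - 2) (p : Equiv.Perm (Fin n)) :
    ∃! x, x ∈ [entryAt n p i, entryAt n p (i + 1), entryAt n p (i + 2)] ∧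
      ∀ y ∈ [entryAt n p i, entryAt n p (i + 1), entryAt n p (i + 2)], y ≠ x →
        (minmaxTree (permList n p)).ancB x y = true := by
  set l := permList n p with hl
  have hlen : l.length = n := by simp [hl, permList]
  have hnd : l.Nodup := by
    rw [hl, permList]
    refine List.nodup_ofFn.mpr ?_
    intro a b hab
    exact p.injective (Fin.ext (Nat.succ_injective hab))
  have he1 : entryAt n p i = l.getD (i - 1) 0 := rfl
  have he2 : entryAt n p (i + 1) = l.getD i 0 := by
    simp only [entryAt, Nat.add_sub_cancel]
    rfl
  have he3 : entryAt n p (i + 2) = l.getD (i + 1) 0 := by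
    show l.getD (i + 2 - 1) 0 = _
    congr 1
  obtain ⟨j, hja, hjb, hj⟩ :=
    mm_exists l.length l hnd le_rfl (i - 1) 3 (by omega) (by omega)
  have hxmem : l.getD j 0 ∈
      [entryAt n p i, entryAt n p (i + 1), entryAt n p (i + 2)] := by
    rw [he1, he2, he3]
    have hcase : j = i - 1 ∨ j = i ∨ j = i + 1 := by omega
    rcases hcase with h | h | h <;> rw [h] <;> simp
  have key : ∀ y ∈ [entryAt n p i, entryAt n p (i + 1), entryAt n p (i + 2)],
      y ≠ l.getD j 0 → (minmaxTree l).ancB (l.getD j 0) y = true := by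
    intro y hy hne
    have haux : ∀ j', i - 1 ≤ j' → j' < i + 2 → y = l.getD j' 0 →
        (minmaxTree l).ancB (l.getD j 0) y = true := by
      intro j' h1 h2 hyv
      have hne' : j' ≠ j := by
        intro h; rw [h] at hyv; exact hne hyv
      rw [hyv]
      exact hj j' h1 (by omega) hne'
    simp only [List.mem_cons, List.not_mem_nil, or_false] at hy
    rcases hy with h | h | h
    · exact haux (i - 1) le_rfl (by omega) (by rw [h, he1])
    · exact haux i (by omega) (by omega) (by rw [h, he2])
    · exact haux (i + 1) (by omega) (by omega) (by rw [h, he3])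
  have hnl : (minmaxTree l).labels.Nodup :=
    ((labels_mmAux l.length l le_rfl).nodup_iff).2 hnd
  refine ⟨l.getD j 0, ⟨hxmem, key⟩, ?_⟩
  intro x' hx'
  obtain ⟨hm', hf'⟩ := hx'
  by_contra hne
  exact BTree.ancB_asymm hnl (key x' hm' hne) (hf' _ hxmem (fun h => hne h.symm))
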